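/- For a random Cartesian tree built from a uniformly random permutation of [n], each node has probability converging to 1/3 of being binary (two children), 1/3 of being a leaf, 1/6 of having only a left child, and 1/6 of having only a right child; more precisely, the expected number of leaves in the random BST on n nodes equals (n+1)/3 for n ≥ 2. -/

import Mathlib

open Filter Real

/-- Binary trees: empty (`leaf`) or a node with left and right subtrees. -/
inductive BinTree where
  | leaf : BinTree
  | node : BinTree → BinTree → BinTree
deriving DecidableEq, Repr

namespace BinTree

/-- Number of nodes. -/
def size : BinTree → ℕ
  | leaf => 0
  | node l r => l.size + r.size + 1

/-- Product of subtree sizes over all nodes: `∏_{v∈t} st(v)`. -/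
def stProd : BinTree → ℕ
  | leaf => 1
  | node l r => (node l r).size * l.stProd * r.stProd

/-- Subtree-size entropy: `H_st(t) = ∑_{v∈t} lg st(v)`. -/
noncomputable def stEntropy : BinTree → ℝ
  | leaf => 0
  | node l r => Real.logb 2 ((node l r).size : ℝ) + l.stEntropy + r.stEntropy

/-- Size of the left subtree of the root. -/
def leftSize : BinTree → ℕ
  | leaf => 0
  | node l _ => l.size

/-- Every node has at most one (nonempty) child. -/
def isPath : BinTree → Prop
  | leaf => True
  | node l r => (l = leaf ∨ r = leaf) ∧ l.isPath ∧ r.isPath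

/-- At every node the sizes of the two subtrees differ by at most 1. -/
def isBalanced : BinTree → Prop
  | leaf => True
  | node l r => ((l.size : ℤ) - (r.size : ℤ)).natAbs ≤ 1 ∧ l.isBalanced ∧ r.isBalanced

/-- Number of leaves (nodes with no children). -/
def leafCount : BinTree → ℕ
  | leaf => 0
  | node l r => (if l = leaf ∧ r = leaf then 1 else 0) + l.leafCount + r.leafCount

/-- Number of binary nodes (both children present). -/
def binCount : BinTree → ℕ
  | leaf => 0
  | node l r => (if l ≠ leaf ∧ r ≠ leaf then 1 else 0) + l.binCount + r.binCount

/-- Number of nodes with only a left child. -/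
def leftOnlyCount : BinTree → ℕ
  | leaf => 0
  | node l r => (if l ≠ leaf ∧ r = leaf then 1 else 0) + l.leftOnlyCount + r.leftOnlyCount

/-- Number of nodes with only a right child. -/
def rightOnlyCount : BinTree → ℕ
  | leaf => 0
  | node l r => (if l = leaf ∧ r ≠ leaf then 1 else 0) + l.rightOnlyCount + r.rightOnlyCount

end BinTree

/-- Cartesian tree construction with explicit fuel (fuel ≥ length suffices). -/
def cartesianAux : ℕ → List ℕ → BinTree
  | 0, _ => .leaf
  | _ + 1, [] => .leaf
  | fuel + 1, x :: xs =>
      let m := List.foldl min x xs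
      let i := (x :: xs).idxOf m
      .node (cartesianAux fuel ((x :: xs).take i)) (cartesianAux fuel ((x :: xs).drop (i + 1)))

/-- The Cartesian tree of a list: root at the (first) minimum, left/right
subtrees built recursively from the prefix/suffix. -/
def cartesian (l : List ℕ) : BinTree := cartesianAux l.length l

/-- The array `A[1..n]` (as a list) associated with a permutation of `Fin n`. -/
def permList {n : ℕ} (p : Equiv.Perm (Fin n)) : List ℕ := List.ofFn fun k => (p k : ℕ)

/-- All binary trees with exactly `n` nodes. -/
def treesOfSize : ℕ → Finset BinTree
  | 0 => {BinTree.leaf}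
  | n + 1 =>
    (Finset.range (n + 1)).attach.biUnion fun i =>
      ((treesOfSize i.1) ×ˢ (treesOfSize (n - i.1))).image fun p => BinTree.node p.1 p.2
termination_by n => n
decreasing_by
  · exact Nat.lt_succ_of_le (Nat.le_of_lt_succ (Finset.mem_range.mp i.2))
  · exact Nat.lt_succ_of_le (Nat.sub_le n i.1)

/-- Shannon entropy (base 2) of the random-BST shape distribution on `n` nodes,
which assigns probability `1/stProd t` to each tree `t` on `n` nodes. -/
noncomputable def shapeEntropy (n : ℕ) : ℝ :=
  - ∑ t ∈ treesOfSize n, (1 / (t.stProd : ℝ)) * Real.logb 2 (1 / (t.stProd : ℝ))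

/-- Expectation of `f` under the random-BST shape distribution on `n` nodes. -/
noncomputable def expCount (f : BinTree → ℕ) (n : ℕ) : ℝ :=
  ∑ t ∈ treesOfSize n, (1 / (t.stProd : ℝ)) * (f t : ℝ)

/-- The entropy recurrence: `H 0 = H 1 = 0`, `H n = lg n + (2/n) ∑_{i<n} H i`. -/
noncomputable def Hrec : ℕ → ℝ
  | 0 => 0
  | 1 => 0
  | n + 2 =>
      Real.logb 2 ((n + 2 : ℕ) : ℝ) +
        (2 / ((n + 2 : ℕ) : ℝ)) * ∑ i ∈ (Finset.range (n + 2)).attach, Hrec i.1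
termination_by n => n
decreasing_by exact Finset.mem_range.mp i.2

/-- `rmq_A(i,j)` (1-based): the position of the (first) minimum of `A[i..j]`. -/
def rmqFun (A : List ℕ) (i j : ℕ) : ℕ :=
  let s := (A.drop (i - 1)).take (j - i + 1)
  i + s.idxOf (List.foldl min (s.headD 0) s)

/-- The inorder rank of the LCA of the nodes with inorder ranks `i` and `j`. -/
def lcaInorder : BinTree → ℕ → ℕ → ℕ
  | .leaf, _, _ => 0
  | .node l r, i, j =>
      let m := l.size + 1
      if i < m ∧ j < m then lcaInorder l i j
      else if m < i ∧ m < j then m + lcaInorder r (i - m) (j - m)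
      else m

/-- The subtree rooted at the node reached from the root by the given
left(`false`)/right(`true`) directions, if it exists. -/
def subAt : BinTree → List Bool → Option BinTree
  | t, [] => some t
  | .leaf, _ :: _ => none
  | .node l _, false :: p => subAt l p
  | .node _ r, true :: p => subAt r p

/-- Subtree size of the node at a position (0 if there is no node there). -/
def stAt (t : BinTree) (pos : List Bool) : ℕ := ((subAt t pos).getD .leaf).size

/-- Left-subtree size of the node at a position. -/
def lsAt (t : BinTree) (pos : List Bool) : ℕ := ((subAt t pos).getD .leaf).leftSize

/-- `Pruned μ s`: `μ` is obtained from `s` by replacing some subtrees by `leaf`. -/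
inductive Pruned : BinTree → BinTree → Prop
  | leaf (t) : Pruned .leaf t
  | node {l' r' l r} : Pruned l' l → Pruned r' r → Pruned (.node l' r') (.node l r)

/-- `PrunedN k μ s`: `μ` is obtained from `s` by pruning exactly `k` (nonempty) subtrees. -/
inductive PrunedN : ℕ → BinTree → BinTree → Prop
  | refl (t) : PrunedN 0 t t
  | prune (l r) : PrunedN 1 .leaf (.node l r)
  | node {a b l' r' l r} : PrunedN a l' l → PrunedN b r' r → PrunedN (a + b) (.node l' r') (.node l r)

/-- `IsSubtree s t`: `s` is the subtree of `t` rooted at some node (or `t` itself). -/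
inductive IsSubtree : BinTree → BinTree → Prop
  | refl (t) : IsSubtree t t
  | left {s l r} : IsSubtree s l → IsSubtree s (.node l r)
  | right {s l r} : IsSubtree s r → IsSubtree s (.node l r)

/-- `∑_{v∈μ} lg st_s(v)`: sum over the nodes of `μ` of the log-subtree-sizes
taken in the host tree `s` (for `μ` pruned from `s`). -/
noncomputable def mixedEntropy : BinTree → BinTree → ℝ
  | .leaf, _ => 0
  | .node _ _, .leaf => 0
  | .node l' r', .node l r =>
      Real.logb 2 ((BinTree.node l r).size : ℝ) + mixedEntropy l' l + mixedEntropy r' r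

/-- 1-based preorder index of the node at a position (0 if no node there). -/
def preorderIdx : BinTree → List Bool → ℕ
  | _, [] => 1
  | .leaf, _ :: _ => 0
  | .node l _, false :: p => 1 + preorderIdx l p
  | .node l r, true :: p => 1 + l.size + preorderIdx r p

/-- 1-based inorder index of the node at a position. -/
def inorderIdx : BinTree → List Bool → ℕ
  | t, [] => t.leftSize + 1
  | .leaf, _ :: _ => 0
  | .node l _, false :: p => inorderIdx l p
  | .node l r, true :: p => l.size + 1 + inorderIdx r p

/-- Binary entropy function (base 2). -/
noncomputable def binH (x : ℝ) : ℝ := -x * Real.logb 2 x - (1 - x) * Real.logb 2 (1 - x)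


lemma stProd_pos (t : BinTree) : 0 < t.stProd := by
  induction t with
  | leaf => simp [BinTree.stProd]
  | node l r hl hr =>
      simp only [BinTree.stProd, BinTree.size]
      positivity

lemma mem_treesOfSize : ∀ n t, t ∈ treesOfSize n ↔ t.size = n := by
  intro n
  induction n using Nat.strong_induction_on with
  | _ n ih =>
    intro t
    match n with
    | 0 =>
      constructor
      · intro h; simp [treesOfSize] at h; subst h; rfl
      · intro h; cases t with
        | leaf => simp [treesOfSize]
        | node l r => simp [BinTree.size] at h
    | n + 1 =>
      rw [treesOfSize]
      simp only [Finset.mem_biUnion, Finset.mem_attach, Finset.mem_image, Finset.mem_product,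
        true_and, Subtype.exists, Finset.mem_range, Prod.exists]
      constructor
      · rintro ⟨i, hi, l, r, ⟨hl, hr⟩, rfl⟩
        rw [ih i (Nat.lt_succ_of_le (Nat.le_of_lt_succ hi))] at hl
        rw [ih (n - i) (Nat.lt_succ_of_le (Nat.sub_le n i))] at hr
        simp [BinTree.size, hl, hr]
        omega
      · intro h
        cases t with
        | leaf => simp [BinTree.size] at h
        | node l r =>
          simp only [BinTree.size] at h
          refine ⟨l.size, by omega, l, r, ⟨?_, ?_⟩, rfl⟩
          · rw [ih l.size (by omega)]
          · rw [ih (n - l.size) (Nat.lt_succ_of_le (Nat.sub_le n l.size))]; omega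

lemma sum_split (g : BinTree → ℝ) (n : ℕ) :
    ∑ t ∈ treesOfSize (n+1), g t
      = ∑ i ∈ Finset.range (n+1), ∑ l ∈ treesOfSize i, ∑ r ∈ treesOfSize (n-i),
          g (.node l r) := by
  rw [treesOfSize]
  rw [Finset.sum_biUnion]
  · rw [← Finset.sum_attach (Finset.range (n+1)) (fun i => ∑ l ∈ treesOfSize i, ∑ r ∈ treesOfSize (n-i), g (.node l r))]
    refine Finset.sum_congr rfl fun i _ => ?_
    rw [Finset.sum_image]
    · rw [Finset.sum_product]
    · rintro ⟨a, b⟩ _ ⟨c, d⟩ _ h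
      simpa [Prod.ext_iff] using h
  · rintro ⟨i, hi⟩ - ⟨j, hj⟩ - hij
    simp only [Finset.disjoint_left]
    rintro t ht ht'
    simp only [Finset.mem_image, Finset.mem_product, Prod.exists] at ht ht'
    obtain ⟨l, r, ⟨hl, -⟩, rfl⟩ := ht
    obtain ⟨l', r', ⟨hl', -⟩, he⟩ := ht'
    rw [mem_treesOfSize] at hl hl'
    cases he
    exact hij (by simp [Subtype.ext_iff]; omega)

lemma stProd_node_cast {i n : ℕ} (hi : i < n + 1) {l r : BinTree}
    (hl : l ∈ treesOfSize i) (hr : r ∈ treesOfSize (n - i)) :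
    (1 / ((BinTree.node l r).stProd : ℝ))
      = (1 / ((n:ℝ)+1)) * (1 / (l.stProd : ℝ)) * (1 / (r.stProd : ℝ)) := by
  rw [mem_treesOfSize] at hl hr
  have h1 := stProd_pos l
  have h2 := stProd_pos r
  simp only [BinTree.stProd, BinTree.size]
  have hsz : l.size + r.size + 1 = n + 1 := by omega
  rw [hsz]
  push_cast
  field_simp

lemma prob_sum : ∀ n, ∑ t ∈ treesOfSize n, (1 / (t.stProd : ℝ)) = 1 := by
  intro n
  induction n using Nat.strong_induction_on with
  | _ n ih =>
    match n with
    | 0 => simp [treesOfSize, BinTree.stProd]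
    | n + 1 =>
      rw [sum_split (fun t => 1 / (t.stProd : ℝ)) n]
      have : ∀ i ∈ Finset.range (n+1),
          (∑ l ∈ treesOfSize i, ∑ r ∈ treesOfSize (n-i),
            (1 / ((BinTree.node l r).stProd : ℝ))) = 1/((n:ℝ)+1) := by
        intro i hi
        rw [Finset.mem_range] at hi
        calc ∑ l ∈ treesOfSize i, ∑ r ∈ treesOfSize (n-i), (1 / ((BinTree.node l r).stProd : ℝ))
            = ∑ l ∈ treesOfSize i, ∑ r ∈ treesOfSize (n-i),
              (1 / ((n:ℝ)+1)) * (1 / (l.stProd : ℝ)) * (1 / (r.stProd : ℝ)) := by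
              refine Finset.sum_congr rfl fun l hl => Finset.sum_congr rfl fun r hr => ?_
              exact stProd_node_cast hi hl hr
          _ = (1/((n:ℝ)+1)) * (∑ l ∈ treesOfSize i, 1 / (l.stProd : ℝ))
                * (∑ r ∈ treesOfSize (n-i), 1 / (r.stProd : ℝ)) := by
              simp only [Finset.mul_sum, Finset.sum_mul]
              rw [Finset.sum_comm]
          _ = 1/((n:ℝ)+1) := by
              rw [ih i (by omega), ih (n-i) (by omega)]; ring
      rw [Finset.sum_congr rfl this]
      rw [Finset.sum_const, Finset.card_range, nsmul_eq_mul]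
      push_cast
      field_simp


lemma ind_sum (i : ℕ) :
    ∑ t ∈ treesOfSize i, (1 / (t.stProd : ℝ)) * (if t = .leaf then 1 else 0)
      = if i = 0 then 1 else 0 := by
  rcases Nat.eq_zero_or_pos i with h | h
  · subst h; simp [treesOfSize, BinTree.stProd]
  · rw [if_neg (by omega)]
    refine Finset.sum_eq_zero fun t ht => ?_
    rw [mem_treesOfSize] at ht
    have : t ≠ .leaf := by
      intro h'; subst h'; simp [BinTree.size] at ht; omega
    simp [this]

lemma double_sum_factor {s t : Finset BinTree} (x y u v w z : BinTree → ℝ) :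
    ∑ l ∈ s, ∑ r ∈ t, (x l * y r + u l * v r + w l * z r)
      = (∑ l ∈ s, x l) * (∑ r ∈ t, y r) + (∑ l ∈ s, u l) * (∑ r ∈ t, v r)
        + (∑ l ∈ s, w l) * (∑ r ∈ t, z r) := by
  simp only [Finset.sum_add_distrib]
  rw [Finset.sum_mul_sum, Finset.sum_mul_sum, Finset.sum_mul_sum]

lemma leafE (n : ℕ) :
    ((n:ℝ)+1) * expCount BinTree.leafCount (n+1)
      = (if n = 0 then 1 else 0)
        + 2 * ∑ i ∈ Finset.range (n+1), expCount BinTree.leafCount i := by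
  have key : ∀ i ∈ Finset.range (n+1),
      (∑ l ∈ treesOfSize i, ∑ r ∈ treesOfSize (n-i),
        (1 / ((BinTree.node l r).stProd : ℝ)) * ((BinTree.node l r).leafCount : ℝ))
      = (1/((n:ℝ)+1)) * ((if i = 0 then (1:ℝ) else 0) * (if n - i = 0 then 1 else 0)
          + expCount BinTree.leafCount i + expCount BinTree.leafCount (n-i)) := by
    intro i hi
    calc ∑ l ∈ treesOfSize i, ∑ r ∈ treesOfSize (n-i),
          (1 / ((BinTree.node l r).stProd : ℝ)) * ((BinTree.node l r).leafCount : ℝ)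
        = ∑ l ∈ treesOfSize i, ∑ r ∈ treesOfSize (n-i),
          (1/((n:ℝ)+1)) *
            ( ((1/(l.stProd:ℝ)) * (if l = .leaf then 1 else 0))
                * ((1/(r.stProd:ℝ)) * (if r = .leaf then 1 else 0))
              + ((1/(l.stProd:ℝ)) * (l.leafCount:ℝ)) * (1/(r.stProd:ℝ))
              + (1/(l.stProd:ℝ)) * ((1/(r.stProd:ℝ)) * (r.leafCount:ℝ)) ) := by
          refine Finset.sum_congr rfl fun l hl => Finset.sum_congr rfl fun r hr => ?_
          rw [stProd_node_cast (Finset.mem_range.mp hi) hl hr]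
          simp only [BinTree.leafCount]
          have h1 := stProd_pos l
          have h2 := stProd_pos r
          by_cases e1 : l = BinTree.leaf <;> by_cases e2 : r = BinTree.leaf <;>
            simp [e1, e2] <;> push_cast <;> ring
      _ = (1/((n:ℝ)+1)) * ((if i = 0 then (1:ℝ) else 0) * (if n - i = 0 then 1 else 0)
            + expCount BinTree.leafCount i + expCount BinTree.leafCount (n-i)) := by
          simp only [← Finset.mul_sum]
          rw [double_sum_factor]
          rw [ind_sum, ind_sum, prob_sum, prob_sum]
          unfold expCount
          ring
  have expand : expCount BinTree.leafCount (n+1)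
      = ∑ i ∈ Finset.range (n+1),
          (1/((n:ℝ)+1)) * ((if i = 0 then (1:ℝ) else 0) * (if n - i = 0 then 1 else 0)
            + expCount BinTree.leafCount i + expCount BinTree.leafCount (n-i)) := by
    unfold expCount
    rw [sum_split (fun t => (1 / (t.stProd : ℝ)) * (t.leafCount : ℝ)) n]
    exact Finset.sum_congr rfl key
  rw [expand, ← Finset.mul_sum]
  have hne : ((n:ℝ)+1) ≠ 0 := by positivity
  rw [← mul_assoc, mul_one_div, div_self hne, one_mul]
  rw [Finset.sum_add_distrib, Finset.sum_add_distrib]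
  have h1 : ∑ i ∈ Finset.range (n+1),
      (if i = 0 then (1:ℝ) else 0) * (if n - i = 0 then 1 else 0)
      = if n = 0 then 1 else 0 := by
    rcases Nat.eq_zero_or_pos n with h | h
    · subst h; simp
    · rw [if_neg (by omega)]
      refine Finset.sum_eq_zero fun i hi => ?_
      rcases Nat.eq_zero_or_pos i with h' | h'
      · subst h'; simp; omega
      · simp [Nat.pos_iff_ne_zero.mp h']
  have h2 : ∑ i ∈ Finset.range (n+1), expCount BinTree.leafCount (n - i)
      = ∑ i ∈ Finset.range (n+1), expCount BinTree.leafCount i := by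
    have := Finset.sum_range_reflect (fun i => expCount BinTree.leafCount i) (n+1)
    simpa using this
  rw [h1, h2]
  ring

lemma E0 : expCount BinTree.leafCount 0 = 0 := by
  simp [expCount, treesOfSize, BinTree.leafCount]

lemma E1 : expCount BinTree.leafCount 1 = 1 := by
  have h := leafE 0
  simp [E0] at h
  linarith

lemma E2 : expCount BinTree.leafCount 2 = 1 := by
  have h := leafE 1
  rw [if_neg (by omega)] at h
  rw [Finset.sum_range_succ, Finset.sum_range_one, E0, E1] at h
  push_cast at h
  linarith

lemma Eratio (n : ℕ) (hn : 2 ≤ n) :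
    ((n:ℝ)+1) * expCount BinTree.leafCount (n+1) = ((n:ℝ)+2) * expCount BinTree.leafCount n := by
  obtain ⟨m, rfl⟩ : ∃ m, n = m + 1 := ⟨n - 1, by omega⟩
  have h1 := leafE (m+1)
  have h2 := leafE m
  rw [if_neg (by omega)] at h1
  rw [if_neg (by omega)] at h2
  rw [Finset.sum_range_succ] at h1
  push_cast at h1 h2 ⊢
  linarith

lemma Eclosed : ∀ n : ℕ, 2 ≤ n → expCount BinTree.leafCount n = ((n:ℝ)+1)/3 := by
  intro n hn
  induction n, hn using Nat.le_induction with
  | base => rw [E2]; norm_num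
  | succ n hn ih =>
      have h := Eratio n hn
      rw [ih] at h
      have hne : ((n:ℝ)+1) ≠ 0 := by positivity
      have h' : ((n:ℝ)+1) * (expCount BinTree.leafCount (n+1) * 3)
          = ((n:ℝ)+1) * (((n:ℝ)+1) + 1) := by
        field_simp at h
        ring_nf
        ring_nf at h
        linear_combination ((n:ℝ) + 1) * h
      have hc := mul_left_cancel₀ hne h'
      push_cast
      linarith




def mirror : BinTree → BinTree
  | .leaf => .leaf
  | .node l r => .node (mirror r) (mirror l)

lemma mirror_size (t : BinTree) : (mirror t).size = t.size := by
  induction t with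
  | leaf => rfl
  | node l r ihl ihr => simp [mirror, BinTree.size, ihl, ihr]; omega

lemma mirror_stProd (t : BinTree) : (mirror t).stProd = t.stProd := by
  induction t with
  | leaf => rfl
  | node l r ihl ihr =>
      simp [mirror, BinTree.stProd, BinTree.size, ihl, ihr, mirror_size]
      ring

lemma mirror_mirror (t : BinTree) : mirror (mirror t) = t := by
  induction t with
  | leaf => rfl
  | node l r ihl ihr => simp [mirror, ihl, ihr]

lemma mirror_eq_leaf {t : BinTree} : mirror t = .leaf ↔ t = .leaf := by
  cases t <;> simp [mirror]

lemma mirror_roc (t : BinTree) : (mirror t).rightOnlyCount = t.leftOnlyCount := by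
  induction t with
  | leaf => rfl
  | node l r ihl ihr =>
      simp only [mirror, BinTree.rightOnlyCount, BinTree.leftOnlyCount, ihl, ihr, ne_eq,
        mirror_eq_leaf]
      by_cases hl : l = BinTree.leaf <;> by_cases hr : r = BinTree.leaf <;>
        simp [hl, hr] <;> omega

lemma mirror_mem {n : ℕ} {t : BinTree} (h : t ∈ treesOfSize n) : mirror t ∈ treesOfSize n := by
  rw [mem_treesOfSize] at h ⊢
  rw [mirror_size, h]

lemma exp_loc_eq_roc (n : ℕ) :
    expCount BinTree.leftOnlyCount n = expCount BinTree.rightOnlyCount n := by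
  unfold expCount
  refine Finset.sum_nbij' (i := fun t => mirror t) (j := fun t => mirror t)
    (fun t ht => mirror_mem ht) (fun t ht => mirror_mem ht)
    (fun t _ => mirror_mirror t) (fun t _ => mirror_mirror t) ?_
  intro t _
  rw [mirror_stProd, mirror_roc]

lemma lc_eq_bc : ∀ t : BinTree, t ≠ .leaf → t.leafCount = t.binCount + 1 := by
  intro t
  induction t with
  | leaf => simp
  | node l r ihl ihr =>
      intro _
      by_cases hl : l = BinTree.leaf <;> by_cases hr : r = BinTree.leaf <;> subst_vars <;>
        simp_all [BinTree.leafCount, BinTree.binCount] <;> omega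

lemma counts_sum : ∀ t : BinTree,
    t.leafCount + t.binCount + t.leftOnlyCount + t.rightOnlyCount = t.size := by
  intro t
  induction t with
  | leaf => rfl
  | node l r ihl ihr =>
      by_cases hl : l = BinTree.leaf <;> by_cases hr : r = BinTree.leaf <;> subst_vars <;>
        simp_all [BinTree.leafCount, BinTree.binCount, BinTree.leftOnlyCount,
          BinTree.rightOnlyCount, BinTree.size] <;> omega

lemma ne_leaf_of_mem {n : ℕ} (hn : 1 ≤ n) {t : BinTree} (ht : t ∈ treesOfSize n) :
    t ≠ .leaf := by
  rw [mem_treesOfSize] at ht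
  intro h; subst h
  simp [BinTree.size] at ht; omega

lemma Bclosed (n : ℕ) (hn : 1 ≤ n) :
    expCount BinTree.binCount n = expCount BinTree.leafCount n - 1 := by
  unfold expCount
  have h : ∀ t ∈ treesOfSize n,
      (1/(t.stProd:ℝ)) * (t.binCount : ℝ)
        = (1/(t.stProd:ℝ)) * (t.leafCount : ℝ) - (1/(t.stProd:ℝ)) := by
    intro t ht
    rw [lc_eq_bc t (ne_leaf_of_mem hn ht)]
    push_cast; ring
  rw [Finset.sum_congr rfl h, Finset.sum_sub_distrib, prob_sum]

lemma size_exp (n : ℕ) :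
    ∑ t ∈ treesOfSize n, (1/(t.stProd:ℝ)) * (t.size:ℝ) = n := by
  have h : ∀ t ∈ treesOfSize n,
      (1/(t.stProd:ℝ)) * (t.size : ℝ) = (1/(t.stProd:ℝ)) * (n:ℝ) := by
    intro t ht
    rw [mem_treesOfSize] at ht
    rw [ht]
  rw [Finset.sum_congr rfl h, ← Finset.sum_mul, prob_sum, one_mul]

lemma LOclosed (n : ℕ) (hn : 2 ≤ n) :
    expCount BinTree.leftOnlyCount n = ((n:ℝ)+1)/6 := by
  have hsum : expCount BinTree.leftOnlyCount n + expCount BinTree.rightOnlyCount n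
      = (n:ℝ) - expCount BinTree.leafCount n - expCount BinTree.binCount n := by
    unfold expCount
    rw [← Finset.sum_add_distrib]
    have h : ∀ t ∈ treesOfSize n,
        (1/(t.stProd:ℝ)) * (t.leftOnlyCount : ℝ) + (1/(t.stProd:ℝ)) * (t.rightOnlyCount : ℝ)
          = (1/(t.stProd:ℝ)) * (t.size:ℝ) - (1/(t.stProd:ℝ)) * (t.leafCount : ℝ)
            - (1/(t.stProd:ℝ)) * (t.binCount : ℝ) := by
      intro t _
      have hc := counts_sum t
      have : (t.leafCount : ℝ) + t.binCount + t.leftOnlyCount + t.rightOnlyCount = t.size := by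
        exact_mod_cast congrArg (Nat.cast : ℕ → ℝ) hc
      rw [← this]
      ring
    rw [Finset.sum_congr rfl h]
    rw [Finset.sum_sub_distrib, Finset.sum_sub_distrib, size_exp]
  rw [exp_loc_eq_roc] at hsum
  rw [Bclosed n (by omega), Eclosed n hn] at hsum
  rw [exp_loc_eq_roc]
  linarith

lemma ROclosed (n : ℕ) (hn : 2 ≤ n) :
    expCount BinTree.rightOnlyCount n = ((n:ℝ)+1)/6 := by
  rw [← exp_loc_eq_roc]; exact LOclosed n hn

lemma BCclosed (n : ℕ) (hn : 2 ≤ n) :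
    expCount BinTree.binCount n = ((n:ℝ)-2)/3 := by
  rw [Bclosed n (by omega), Eclosed n hn]; ring

open Filter in

lemma lim_helper (c L : ℝ) :
    Tendsto (fun n : ℕ => L + c / (n:ℝ)) atTop (nhds L) := by
  simpa using tendsto_const_nhds.add (tendsto_const_div_atTop_nhds_zero_nat c)

open Filter in

/-- For the random BST on `n` nodes: the expected number of leaves is `(n+1)/3`
for `n ≥ 2`; asymptotically a node is a leaf or a binary node with probability
→ 1/3 each, and has only a left (resp. only a right) child with probability
→ 1/6 each. -/
theorem stmt11 :
    (∀ n : ℕ, 2 ≤ n → expCount BinTree.leafCount n = ((n : ℝ) + 1) / 3)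
    ∧ Filter.Tendsto (fun n : ℕ => expCount BinTree.leafCount n / (n : ℝ))
        Filter.atTop (nhds (1 / 3))
    ∧ Filter.Tendsto (fun n : ℕ => expCount BinTree.binCount n / (n : ℝ))
        Filter.atTop (nhds (1 / 3))
    ∧ Filter.Tendsto (fun n : ℕ => expCount BinTree.leftOnlyCount n / (n : ℝ))
        Filter.atTop (nhds (1 / 6))
    ∧ Filter.Tendsto (fun n : ℕ => expCount BinTree.rightOnlyCount n / (n : ℝ))
        Filter.atTop (nhds (1 / 6)) := by
  refine ⟨Eclosed, ?_, ?_, ?_, ?_⟩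
  · refine Tendsto.congr' ?_ (lim_helper (1/3) (1/3))
    filter_upwards [eventually_ge_atTop 2] with n hn
    have hne : (n:ℝ) ≠ 0 := by
      have : (2:ℝ) ≤ n := by exact_mod_cast hn
      linarith
    rw [Eclosed n hn]
    field_simp
    try ring
  · refine Tendsto.congr' ?_ (lim_helper (-2/3) (1/3))
    filter_upwards [eventually_ge_atTop 2] with n hn
    have hne : (n:ℝ) ≠ 0 := by
      have : (2:ℝ) ≤ n := by exact_mod_cast hn
      linarith
    rw [BCclosed n hn]
    field_simp
    try ring
  · refine Tendsto.congr' ?_ (lim_helper (1/6) (1/6))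
    filter_upwards [eventually_ge_atTop 2] with n hn
    have hne : (n:ℝ) ≠ 0 := by
      have : (2:ℝ) ≤ n := by exact_mod_cast hn
      linarith
    rw [LOclosed n hn]
    field_simp
    try ring
  · refine Tendsto.congr' ?_ (lim_helper (1/6) (1/6))
    filter_upwards [eventually_ge_atTop 2] with n hn
    have hne : (n:ℝ) ≠ 0 := by
      have : (2:ℝ) ≤ n := by exact_mod_cast hn
      linarith
    rw [ROclosed n hn]
    field_simp
    try ring
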